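/- arXiv:2502.15183 — 4 statements merged into one kernel-verified Lean document; each statement's English description precedes it below -/
import Mathlib

section
/- Let B be a real d×d matrix and a > 0 a constant such that the operator norm satisfies ‖e^{sB}‖ ≤ e^{−as} for all s ≥ 0. Let Π be a measure on ℝ^d and n ≥ 1 an integer with ∫_{|y|>1} |y|^n dΠ(y) < ∞. Then ∫_0^∞ ( ∫_{ℝ^d} 1_{{|e^{sB}y| > 1}} |e^{sB}y|^n dΠ(y) ) ds ≤ (1/(n a)) ∫_{|y|>1} |y|^n dΠ(y) < ∞. In particular the measure Π_∞ defined by ∫ f dΠ_∞ = ∫_0^∞ ∫ f(e^{sB}y) dΠ(y) ds satisfies ∫_{|x|>1} |x|^n dΠ_∞(x) < ∞. -/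
open MeasureTheory Measure Matrix Set
open scoped ENNReal NNReal InnerProductSpace

noncomputable section

namespace LevyOU

/-- Euclidean space `ℝ^d`. -/
abbrev E (d : ℕ) := EuclideanSpace ℝ (Fin d)

variable {d : ℕ}

/-- The matrix exponential `e^{sB}` acting on `ℝ^d` as a continuous linear map. -/
def expCLM (B : Matrix (Fin d) (Fin d) ℝ) (s : ℝ) : E d →L[ℝ] E d :=
  Matrix.toEuclideanCLM (𝕜 := ℝ) (NormedSpace.exp (s • B))

/-- `Q_t := ∫_0^t e^{sB} Q e^{sBᵀ} ds` (entrywise Bochner integral). -/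
def Qmat (B Q : Matrix (Fin d) (Fin d) ℝ) (t : ℝ) : Matrix (Fin d) (Fin d) ℝ :=
  Matrix.of fun i j => ∫ s in Set.Ioc (0 : ℝ) t,
    (NormedSpace.exp (s • B) * Q * (NormedSpace.exp (s • B))ᵀ) i j

/-- `Q_∞ := ∫_0^∞ e^{sB} Q e^{sBᵀ} ds` (entrywise Bochner integral). -/
def Qinf (B Q : Matrix (Fin d) (Fin d) ℝ) : Matrix (Fin d) (Fin d) ℝ :=
  Matrix.of fun i j => ∫ s in Set.Ioi (0 : ℝ),
    (NormedSpace.exp (s • B) * Q * (NormedSpace.exp (s • B))ᵀ) i j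

/-- The jump part of the Lévy–Khintchine integrand:
`∫ (exp(i⟨e^{sBᵀ}ξ, y⟩) − 1 − i⟨e^{sBᵀ}ξ, y⟩ 1_{|y|≤1}) dΠ(y)`. -/
def jumpTerm (B : Matrix (Fin d) (Fin d) ℝ) (Pim : Measure (E d)) (ξ : E d) (s : ℝ) : ℂ :=
  ∫ y, (Complex.exp (Complex.I * (⟪expCLM Bᵀ s ξ, y⟫_ℝ : ℂ)) - 1 -
      (if ‖y‖ ≤ 1 then Complex.I * (⟪expCLM Bᵀ s ξ, y⟫_ℝ : ℂ) else 0)) ∂Pim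

/-- The Lévy–Khintchine exponent `Ψ_t` for finite `t`. -/
def Psi (B Q : Matrix (Fin d) (Fin d) ℝ) (Pim : Measure (E d)) (t : ℝ) (ξ : E d) : ℂ :=
  -(1 / 2 : ℂ) * ((⟪(Matrix.toEuclideanCLM (𝕜 := ℝ) (Qmat B Q t)) ξ, ξ⟫_ℝ : ℝ) : ℂ) +
    ∫ s in Set.Ioc (0 : ℝ) t, jumpTerm B Pim ξ s

/-- The Lévy–Khintchine exponent `Ψ_∞`. -/
def PsiInf (B Q : Matrix (Fin d) (Fin d) ℝ) (Pim : Measure (E d)) (ξ : E d) : ℂ :=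
  -(1 / 2 : ℂ) * ((⟪(Matrix.toEuclideanCLM (𝕜 := ℝ) (Qinf B Q)) ξ, ξ⟫_ℝ : ℝ) : ℂ) +
    ∫ s in Set.Ioi (0 : ℝ), jumpTerm B Pim ξ s

/-- The characteristic function of a measure on `ℝ^d`. -/
def charFn (ν : Measure (E d)) (ξ : E d) : ℂ :=
  ∫ x, Complex.exp (Complex.I * (⟪ξ, x⟫_ℝ : ℂ)) ∂ν

/-- The Lévy–Ornstein–Uhlenbeck semigroup `P_t f (x) = ∫ f(e^{tB}x + y) dρ_t(y)`. -/
def P {F : Type*} [NormedAddCommGroup F] [NormedSpace ℝ F]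
    (B : Matrix (Fin d) (Fin d) ℝ) (ρ : ℝ → Measure (E d)) (t : ℝ) (f : E d → F)
    (x : E d) : F :=
  ∫ y, f (expCLM B t x + y) ∂(ρ t)

/-- The set `ℕ(λ) = {n₁λ₁ + ⋯ + n_dλ_d : nᵢ ∈ ℕ}`. -/
def NLambda (lam : Fin d → ℂ) : Set ℂ :=
  {θ : ℂ | ∃ n : Fin d → ℕ, θ = ∑ i, (n i : ℂ) * lam i}

/-- `lam` enumerates the complex eigenvalues of the real matrix `B`
counted with algebraic multiplicity. -/
def IsEigList (B : Matrix (Fin d) (Fin d) ℝ) (lam : Fin d → ℂ) : Prop :=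
  (B.map (fun x : ℝ => (x : ℂ))).charpoly.roots = Multiset.map lam Finset.univ.val

/-- Lemma 6.3, polynomial moments: transfer of polynomial moments
from `Π` to `Π_∞ = ∫_0^∞ Π ∘ e^{-sB} ds`. -/
theorem levy_measure_moment_transfer
    {d : ℕ} (hd : 0 < d)
    (B : Matrix (Fin d) (Fin d) ℝ) (a : ℝ) (ha : 0 < a)
    (hop : ∀ s : ℝ, 0 ≤ s →
      ‖Matrix.toEuclideanCLM (𝕜 := ℝ) (NormedSpace.exp (s • B))‖ ≤ Real.exp (-a * s))
    (Pim : Measure (E d)) (n : ℕ) (hn : 1 ≤ n)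
    (hmom : ∫⁻ y in {y : E d | 1 < ‖y‖}, ENNReal.ofReal (‖y‖ ^ n) ∂Pim < ⊤) :
    (∫⁻ s in Set.Ioi (0 : ℝ),
        ∫⁻ y in {y : E d | 1 < ‖expCLM B s y‖}, ENNReal.ofReal (‖expCLM B s y‖ ^ n) ∂Pim) ≤
      ENNReal.ofReal (1 / (n * a)) *
        ∫⁻ y in {y : E d | 1 < ‖y‖}, ENNReal.ofReal (‖y‖ ^ n) ∂Pim ∧
    (∫⁻ s in Set.Ioi (0 : ℝ),
        ∫⁻ y in {y : E d | 1 < ‖expCLM B s y‖}, ENNReal.ofReal (‖expCLM B s y‖ ^ n) ∂Pim) < ⊤ := by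
    classical
  set M := ∫⁻ y in {y : E d | 1 < ‖y‖}, ENNReal.ofReal (‖y‖ ^ n) ∂Pim with hM
  have hMne : M ≠ ⊤ := hmom.ne
  have hnpos : (0 : ℝ) < (n : ℝ) := by exact_mod_cast hn
  have hna : 0 < (n : ℝ) * a := mul_pos hnpos ha
  -- key pointwise-in-s bound
  have key : ∀ s ∈ Set.Ioi (0 : ℝ),
      (∫⁻ y in {y : E d | 1 < ‖expCLM B s y‖}, ENNReal.ofReal (‖expCLM B s y‖ ^ n) ∂Pim)
        ≤ ENNReal.ofReal (Real.exp (-((n : ℝ) * a) * s)) * M := by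
    intro s hs
    have hs0 : (0 : ℝ) ≤ s := le_of_lt hs
    have hb : ∀ y : E d, ‖expCLM B s y‖ ≤ Real.exp (-a * s) * ‖y‖ := fun y =>
      ((expCLM B s).le_opNorm y).trans
        (mul_le_mul_of_nonneg_right (hop s hs0) (norm_nonneg y))
    have hexp1 : Real.exp (-a * s) ≤ 1 := by
      rw [Real.exp_le_one_iff]
      nlinarith
    have hsub : {y : E d | 1 < ‖expCLM B s y‖} ⊆ {y : E d | 1 < ‖y‖} := by
      intro y hy
      simp only [Set.mem_setOf_eq] at hy ⊢
      calc (1 : ℝ) < ‖expCLM B s y‖ := hy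
        _ ≤ Real.exp (-a * s) * ‖y‖ := hb y
        _ ≤ 1 * ‖y‖ := mul_le_mul_of_nonneg_right hexp1 (norm_nonneg y)
        _ = ‖y‖ := one_mul _
    have hpt : ∀ y : E d, ENNReal.ofReal (‖expCLM B s y‖ ^ n)
        ≤ ENNReal.ofReal (Real.exp (-((n : ℝ) * a) * s)) * ENNReal.ofReal (‖y‖ ^ n) := by
      intro y
      rw [← ENNReal.ofReal_mul (Real.exp_pos _).le]
      apply ENNReal.ofReal_le_ofReal
      have h1 : ‖expCLM B s y‖ ^ n ≤ (Real.exp (-a * s) * ‖y‖) ^ n :=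
        pow_le_pow_left₀ (norm_nonneg _) (hb y) n
      have h2 : (Real.exp (-a * s) * ‖y‖) ^ n = Real.exp (-((n : ℝ) * a) * s) * ‖y‖ ^ n := by
        rw [mul_pow, ← Real.exp_nat_mul]
        ring_nf
      rw [← h2]; exact h1
    calc (∫⁻ y in {y : E d | 1 < ‖expCLM B s y‖}, ENNReal.ofReal (‖expCLM B s y‖ ^ n) ∂Pim)
        ≤ ∫⁻ y in {y : E d | 1 < ‖y‖}, ENNReal.ofReal (‖expCLM B s y‖ ^ n) ∂Pim :=
          lintegral_mono_set hsub
      _ ≤ ∫⁻ y in {y : E d | 1 < ‖y‖},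
            ENNReal.ofReal (Real.exp (-((n : ℝ) * a) * s)) * ENNReal.ofReal (‖y‖ ^ n) ∂Pim :=
          lintegral_mono fun y => hpt y
      _ = ENNReal.ofReal (Real.exp (-((n : ℝ) * a) * s)) * M :=
          lintegral_const_mul' _ _ ENNReal.ofReal_ne_top
  have hlint : ∫⁻ s in Set.Ioi (0 : ℝ), ENNReal.ofReal (Real.exp (-((n : ℝ) * a) * s))
      = ENNReal.ofReal (1 / ((n : ℝ) * a)) := by
    rw [← ofReal_integral_eq_lintegral_ofReal (exp_neg_integrableOn_Ioi 0 hna)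
        (Filter.Eventually.of_forall fun x => (Real.exp_pos _).le)]
    congr 1
    have := integral_comp_mul_left_Ioi (fun x : ℝ => Real.exp (-x)) 0 hna
    simp only [mul_zero, neg_mul, smul_eq_mul] at this ⊢
    rw [this, integral_exp_neg_Ioi, neg_zero, Real.exp_zero, mul_one, one_div]
  have hmain : (∫⁻ s in Set.Ioi (0 : ℝ),
      ∫⁻ y in {y : E d | 1 < ‖expCLM B s y‖}, ENNReal.ofReal (‖expCLM B s y‖ ^ n) ∂Pim)
        ≤ ENNReal.ofReal (1 / ((n : ℝ) * a)) * M := by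
    calc (∫⁻ s in Set.Ioi (0 : ℝ),
        ∫⁻ y in {y : E d | 1 < ‖expCLM B s y‖}, ENNReal.ofReal (‖expCLM B s y‖ ^ n) ∂Pim)
        ≤ ∫⁻ s in Set.Ioi (0 : ℝ),
            ENNReal.ofReal (Real.exp (-((n : ℝ) * a) * s)) * M :=
          setLIntegral_mono' measurableSet_Ioi key
      _ = (∫⁻ s in Set.Ioi (0 : ℝ), ENNReal.ofReal (Real.exp (-((n : ℝ) * a) * s))) * M :=
          lintegral_mul_const' M _ hMne
      _ = ENNReal.ofReal (1 / ((n : ℝ) * a)) * M := by rw [hlint]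
  refine ⟨hmain, hmain.trans_lt ?_⟩
  exact ENNReal.mul_lt_top ENNReal.ofReal_lt_top hmom
end LevyOU
end
end

section
/- Let B be a real d×d matrix and a > 0 with ‖e^{sB}‖ ≤ e^{−as} for all s ≥ 0, and let Π be a measure on ℝ^d with ∫_{|y|>1} log|y| dΠ(y) < ∞ and ∫_{|y|>1} e^{κ|y|} dΠ(y) < ∞ for some κ > 0. Then ∫_0^∞ ( ∫_{ℝ^d} 1_{{|e^{sB}y| > 1}} e^{κ|e^{sB}y|} dΠ(y) ) ds < ∞. In particular, the measure Π_∞ defined by ∫ f dΠ_∞ = ∫_0^∞ ∫ f(e^{sB}y) dΠ(y) ds satisfies ∫_{|x|>1} e^{κ|x|} dΠ_∞(x) < ∞. -/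
open MeasureTheory Measure Matrix Set
open scoped ENNReal NNReal InnerProductSpace

noncomputable section

namespace LevyOU

variable {d : ℕ}

lemma continuous_toEuclideanCLM :
    Continuous (fun M : Matrix (Fin d) (Fin d) ℝ => Matrix.toEuclideanCLM (𝕜 := ℝ) M) := by
  let L : Matrix (Fin d) (Fin d) ℝ →ₗ[ℝ] (E d →L[ℝ] E d) :=
    { toFun := fun M => Matrix.toEuclideanCLM (𝕜 := ℝ) M
      map_add' := fun x y => map_add _ x y
      map_smul' := fun c x => map_smul _ c x }
  exact L.continuous_of_finiteDimensional

lemma expCLM_eq (B : Matrix (Fin d) (Fin d) ℝ) (s : ℝ) :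
    expCLM B s = NormedSpace.exp (s • (Matrix.toEuclideanCLM (𝕜 := ℝ) B)) := by
  open scoped Matrix.Norms.L2Operator in
  rw [expCLM, NormedSpace.map_exp_of_mem_ball (𝕂 := ℝ) (Matrix.toEuclideanCLM (𝕜 := ℝ) (n := Fin d))
    continuous_toEuclideanCLM _ ((NormedSpace.expSeries_radius_eq_top ℝ (Matrix (Fin d) (Fin d) ℝ)).symm ▸ edist_lt_top _ _),
    _root_.map_smul]

lemma continuous_expCLM (B : Matrix (Fin d) (Fin d) ℝ) :
    Continuous (fun s : ℝ => expCLM B s) := by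
  simp only [expCLM_eq]
  exact (continuous_iff_continuousAt.mpr fun x => (NormedSpace.exp_analytic (𝕂 := ℝ) x).continuousAt).comp
    (continuous_id.smul continuous_const)

lemma continuous_expCLM_apply (B : Matrix (Fin d) (Fin d) ℝ) :
    Continuous (fun p : ℝ × E d => expCLM B p.1 p.2) :=
  isBoundedBilinearMap_apply.continuous.comp
    (((continuous_expCLM B).comp continuous_fst).prodMk continuous_snd)

/-- Lemma 6.3, exponential moments: transfer of exponential moments
from `Π` to `Π_∞`. -/
theorem levy_measure_exponential_moment_transfer
    {d : ℕ} (hd : 0 < d)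
    (B : Matrix (Fin d) (Fin d) ℝ) (a : ℝ) (ha : 0 < a)
    (hop : ∀ s : ℝ, 0 ≤ s →
      ‖Matrix.toEuclideanCLM (𝕜 := ℝ) (NormedSpace.exp (s • B))‖ ≤ Real.exp (-a * s))
    (Pim : Measure (E d))
    (hlog : ∫⁻ y in {y : E d | 1 < ‖y‖}, ENNReal.ofReal (Real.log ‖y‖) ∂Pim < ⊤)
    (κ : ℝ) (hκ : 0 < κ)
    (hexp : ∫⁻ y in {y : E d | 1 < ‖y‖}, ENNReal.ofReal (Real.exp (κ * ‖y‖)) ∂Pim < ⊤) :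
    ∫⁻ s in Set.Ioi (0 : ℝ),
      ∫⁻ y in {y : E d | 1 < ‖expCLM B s y‖},
        ENNReal.ofReal (Real.exp (κ * ‖expCLM B s y‖)) ∂Pim < ⊤ := by
  -- basic norm bound
  have hnorm : ∀ s : ℝ, 0 ≤ s → ∀ y : E d, ‖expCLM B s y‖ ≤ Real.exp (-a * s) * ‖y‖ := by
    intro s hs y
    calc ‖expCLM B s y‖ ≤ ‖Matrix.toEuclideanCLM (𝕜 := ℝ) (NormedSpace.exp (s • B))‖ * ‖y‖ :=
          (Matrix.toEuclideanCLM (𝕜 := ℝ) (NormedSpace.exp (s • B))).le_opNorm y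
      _ ≤ Real.exp (-a * s) * ‖y‖ := mul_le_mul_of_nonneg_right (hop s hs) (norm_nonneg y)
  set S : Set (E d) := {y : E d | 1 < ‖y‖} with hSdef
  have hSmeas : MeasurableSet S := (isOpen_lt continuous_const continuous_norm).measurableSet
  set μ : Measure (E d) := Pim.restrict S with hμdef
  have hμexp : ∫⁻ y, ENNReal.ofReal (Real.exp (κ * ‖y‖)) ∂μ < ⊤ := hexp
  haveI hμfin : IsFiniteMeasure μ := by
    constructor
    calc μ univ = ∫⁻ _, 1 ∂μ := (lintegral_one).symm
      _ ≤ ∫⁻ y, ENNReal.ofReal (Real.exp (κ * ‖y‖)) ∂μ := by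
          refine lintegral_mono fun y => ?_
          rw [show (1 : ℝ≥0∞) = ENNReal.ofReal 1 by simp]
          exact ENNReal.ofReal_le_ofReal (Real.one_le_exp (by positivity))
      _ < ⊤ := hμexp
  set A : ℝ → Set (E d) := fun s => {y : E d | 1 < ‖expCLM B s y‖} with hAdef
  have hAmeas : ∀ s, MeasurableSet (A s) :=
    fun s => (isOpen_lt continuous_const (expCLM B s).continuous.norm).measurableSet
  have hAsub : ∀ s : ℝ, 0 ≤ s → A s ⊆ S := by
    intro s hs y hy
    have h1 : (1 : ℝ) < ‖expCLM B s y‖ := hy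
    have h2 : ‖expCLM B s y‖ ≤ Real.exp (-a * s) * ‖y‖ := hnorm s hs y
    have h3 : Real.exp (-a * s) ≤ 1 := Real.exp_le_one_iff.mpr (by nlinarith)
    have : (1 : ℝ) < ‖y‖ := by nlinarith [norm_nonneg y]
    exact this
  set F : ℝ → E d → ℝ≥0∞ := fun s y => ENNReal.ofReal (Real.exp (κ * ‖expCLM B s y‖)) with hFdef
  set h : ℝ → E d → ℝ≥0∞ := fun s y => (A s).indicator (F s) y with hhdef
  -- Step 1 : rewrite with μ
  have step1 : ∫⁻ s in Set.Ioi (0 : ℝ), ∫⁻ y in A s, F s y ∂Pim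
      = ∫⁻ s in Set.Ioi (0 : ℝ), ∫⁻ y, h s y ∂μ := by
    refine setLIntegral_congr_fun measurableSet_Ioi ?_
    intro s hs
    rw [hhdef]
    beta_reduce
    rw [lintegral_indicator (hAmeas s), hμdef, Measure.restrict_restrict (hAmeas s),
      inter_eq_left.mpr (hAsub s (le_of_lt hs))]
  -- Step 2 : swap
  have hmeasU : Measurable (Function.uncurry h) := by
    have hcont2 : Continuous (fun p : ℝ × E d => ‖expCLM B p.1 p.2‖) :=
      (continuous_expCLM_apply B).norm
    have hU : MeasurableSet {p : ℝ × E d | 1 < ‖expCLM B p.1 p.2‖} :=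
      (isOpen_lt continuous_const hcont2).measurableSet
    have : Function.uncurry h = Set.indicator {p : ℝ × E d | 1 < ‖expCLM B p.1 p.2‖}
        (fun p => ENNReal.ofReal (Real.exp (κ * ‖expCLM B p.1 p.2‖))) := by
      funext p
      rcases p with ⟨s, y⟩
      rfl
    rw [this]
    exact (ENNReal.continuous_ofReal.comp
      (Real.continuous_exp.comp (continuous_const.mul hcont2))).measurable.indicator hU
  have step2 : ∫⁻ s in Set.Ioi (0 : ℝ), ∫⁻ y, h s y ∂μ
      = ∫⁻ y, (∫⁻ s in Set.Ioi (0 : ℝ), h s y) ∂μ :=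
    lintegral_lintegral_swap hmeasU.aemeasurable
  -- Step 3 : pointwise bound in y
  have step3 : ∀ y : E d, y ∈ S →
      ∫⁻ s in Set.Ioi (0 : ℝ), h s y ≤ ENNReal.ofReal (Real.exp (κ * ‖y‖) * (a * κ)⁻¹) := by
    intro y hy
    set r : ℝ := ‖y‖ with hrdef
    have hr : 1 < r := hy
    have hr0 : 0 < r := lt_trans one_pos hr
    set T : ℝ := Real.log r / a with hTdef
    have hT : 0 ≤ T := div_nonneg (Real.log_nonneg hr.le) ha.le
    have haT : a * T = Real.log r := by rw [hTdef]; field_simp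
    set φ : ℝ → ℝ := fun s => Real.exp (κ * (r * Real.exp (-a * s))) with hφdef
    have hφcont : Continuous φ :=
      Real.continuous_exp.comp (continuous_const.mul (continuous_const.mul
        (Real.continuous_exp.comp (continuous_const.mul continuous_id))))
    have key : ∀ s ∈ Set.Ioi (0 : ℝ),
        h s y ≤ (Set.Ioc (0 : ℝ) T).indicator (fun s => ENNReal.ofReal (φ s)) s := by
      intro s hs
      by_cases hyA : y ∈ A s
      · have h1 : (1 : ℝ) < ‖expCLM B s y‖ := hyA
        have h2 : ‖expCLM B s y‖ ≤ Real.exp (-a * s) * r := hnorm s (le_of_lt hs) y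
        have h3 : (1 : ℝ) < Real.exp (-a * s) * r := lt_of_lt_of_le h1 h2
        have h4 : Real.exp (a * s) < r := by
          have hx : Real.exp (-a * s) = (Real.exp (a * s))⁻¹ := by
            rw [show -a * s = -(a * s) by ring, Real.exp_neg]
          rw [hx] at h3
          have hxpos := Real.exp_pos (a * s)
          nlinarith [mul_inv_cancel₀ hxpos.ne']
        have h5 : s ∈ Set.Ioc (0 : ℝ) T := by
          refine ⟨hs, ?_⟩
          have hlt : a * s < Real.log r := (Real.lt_log_iff_exp_lt hr0).mpr h4
          rw [hTdef]
          rw [le_div_iff₀ ha]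
          nlinarith
        rw [Set.indicator_of_mem h5, hhdef]
        simp only [Set.indicator_of_mem hyA, hFdef, hφdef]
        refine ENNReal.ofReal_le_ofReal (Real.exp_le_exp.mpr ?_)
        have : ‖expCLM B s y‖ ≤ r * Real.exp (-a * s) := by linarith [h2]
        nlinarith [hκ.le, this]
      · rw [hhdef]
        simp only [Set.indicator_of_notMem hyA]
        exact bot_le
    calc ∫⁻ s in Set.Ioi (0 : ℝ), h s y
        ≤ ∫⁻ s in Set.Ioi (0 : ℝ),
            (Set.Ioc (0 : ℝ) T).indicator (fun s => ENNReal.ofReal (φ s)) s :=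
          lintegral_mono_ae ((ae_restrict_mem measurableSet_Ioi).mono key)
      _ = ∫⁻ s in Set.Ioc (0 : ℝ) T, ENNReal.ofReal (φ s) := by
          rw [lintegral_indicator measurableSet_Ioc, Measure.restrict_restrict measurableSet_Ioc,
            inter_eq_left.mpr Set.Ioc_subset_Ioi_self]
      _ = ENNReal.ofReal (∫ s in Set.Ioc (0 : ℝ) T, φ s) := by
          rw [ofReal_integral_eq_lintegral_ofReal (hφcont.integrableOn_Ioc)
            (Filter.Eventually.of_forall fun s => Real.exp_nonneg _)]
      _ ≤ ENNReal.ofReal (Real.exp (κ * r) * (a * κ)⁻¹) := by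
          refine ENNReal.ofReal_le_ofReal ?_
          rw [← intervalIntegral.integral_of_le hT]
          set G : ℝ → ℝ := fun s => -(a * κ)⁻¹ * Real.exp (κ * (r * Real.exp (-a * s))) with hGdef
          set G' : ℝ → ℝ := fun s => (r * Real.exp (-a * s)) * φ s with hG'def
          have hG'cont : Continuous G' :=
            ((continuous_const.mul (Real.continuous_exp.comp
              (continuous_const.mul continuous_id))).mul hφcont)
          have hderiv : ∀ s ∈ Set.uIcc (0 : ℝ) T, HasDerivAt G (G' s) s := by
            intro s _
            have h1 : HasDerivAt (fun s : ℝ => -a * s) (-a) s := by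
              simpa using (hasDerivAt_id s).const_mul (-a)
            have h2 := h1.exp
            have h3 := h2.const_mul r
            have h4 := h3.const_mul κ
            have h5 := h4.exp
            have h6 := h5.const_mul (-(a * κ)⁻¹)
            refine HasDerivAt.congr_deriv h6 ?_
            symm
            have hane : a ≠ 0 := ha.ne'
            have hκne : κ ≠ 0 := hκ.ne'
            show r * Real.exp (-a * s) * Real.exp (κ * (r * Real.exp (-a * s))) = _
            field_simp
          have hmono : ∀ s ∈ Set.Icc (0 : ℝ) T, φ s ≤ G' s := by
            intro s hsi
            have h1 : a * s ≤ Real.log r := by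
              rcases hsi with ⟨hs0, hsT⟩
              calc a * s ≤ a * T := by nlinarith
                _ = Real.log r := haT
            have h2 : Real.exp (-a * s) ≥ r⁻¹ := by
              rw [show -a * s = -(a * s) by ring, Real.exp_neg, ge_iff_le]
              have hle : Real.exp (a * s) ≤ r := by
                calc Real.exp (a * s) ≤ Real.exp (Real.log r) := Real.exp_le_exp.mpr h1
                  _ = r := Real.exp_log hr0
              exact inv_anti₀ (Real.exp_pos _) hle
            have h3 : 1 ≤ r * Real.exp (-a * s) := by
              calc (1 : ℝ) = r * r⁻¹ := (mul_inv_cancel₀ hr0.ne').symm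
                _ ≤ r * Real.exp (-a * s) := mul_le_mul_of_nonneg_left h2 hr0.le
            rw [hG'def]
            exact le_mul_of_one_le_left (Real.exp_nonneg _) h3
          calc ∫ s in (0 : ℝ)..T, φ s ≤ ∫ s in (0 : ℝ)..T, G' s :=
                intervalIntegral.integral_mono_on hT
                  (hφcont.intervalIntegrable _ _) (hG'cont.intervalIntegrable _ _) hmono
            _ = G T - G 0 := intervalIntegral.integral_eq_sub_of_hasDerivAt hderiv
                  (hG'cont.intervalIntegrable _ _)
            _ ≤ Real.exp (κ * r) * (a * κ)⁻¹ := by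
                simp only [hGdef]
                have e0 : r * Real.exp (-a * 0) = r := by norm_num
                rw [e0]
                have hc : (0 : ℝ) < (a * κ)⁻¹ := by positivity
                have hX : (0 : ℝ) < Real.exp (κ * (r * Real.exp (-a * T))) := Real.exp_pos _
                nlinarith
    -- Step 4: conclude
  calc ∫⁻ s in Set.Ioi (0 : ℝ), ∫⁻ y in A s, F s y ∂Pim
      = ∫⁻ y, (∫⁻ s in Set.Ioi (0 : ℝ), h s y) ∂μ := by rw [step1, step2]
    _ ≤ ∫⁻ y, ENNReal.ofReal (Real.exp (κ * ‖y‖) * (a * κ)⁻¹) ∂μ := by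
        refine lintegral_mono_ae (((ae_restrict_mem hSmeas).mono ?_))
        intro y hy
        exact step3 y hy
    _ = (∫⁻ y, ENNReal.ofReal (Real.exp (κ * ‖y‖)) ∂μ) * ENNReal.ofReal ((a * κ)⁻¹) := by
        rw [← lintegral_mul_const' _ _ ENNReal.ofReal_ne_top]
        congr 1
        funext y
        rw [ENNReal.ofReal_mul (Real.exp_nonneg _)]
    _ < ⊤ := ENNReal.mul_lt_top hμexp ENNReal.ofReal_lt_top
end LevyOU
end
end

section
/- Let d ≥ 1, 1 < p < ∞ and m > 0. Let q be a nonzero polynomial on ℝ^d and suppose that for some coordinate j ∈ {1,…,d} the degree k of q in the variable x_j satisfies p·k ≥ m. Then ∫_{ℝ^d} |q(x)|^p (2 + |x|)^{−m} dx = ∞. -/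
open MeasureTheory Measure Matrix Set
open scoped ENNReal NNReal InnerProductSpace

noncomputable section

namespace LevyOU

variable {d : ℕ}

/-- One-variable divergence: a nonzero real polynomial `f` with `m ≤ p * deg f` has
`∫ |f(t)|^p (2 + (|t| + C))^{-m} dt = ∞`. -/
lemma aux_one_var (p m C : ℝ) (hp : 1 < p) (hm : 0 < m) (hC : 0 ≤ C)
    (f : Polynomial ℝ) (hf : f ≠ 0) (hdeg : m ≤ p * (f.natDegree : ℝ)) :
    ∫⁻ t : ℝ, ENNReal.ofReal (|Polynomial.eval t f| ^ p * (2 + (|t| + C)) ^ (-m)) = ⊤ := by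
  have hp0 : (0:ℝ) < p := lt_trans one_pos hp
  set a := f.leadingCoeff with ha
  have ha0 : a ≠ 0 := Polynomial.leadingCoeff_ne_zero.mpr hf
  have hapos : 0 < |a| := abs_pos.mpr ha0
  set k := f.natDegree with hk
  have hlit : (fun x : ℝ => Polynomial.eval x f - a * x ^ k) =o[Filter.atTop]
      (fun x : ℝ => a * x ^ k) := f.isEquivalent_atTop_lead.isLittleO
  have hev2 : ∀ᶠ t in Filter.atTop, |a| / 2 * t ^ k ≤ |Polynomial.eval t f| := by
    filter_upwards [Asymptotics.isLittleO_iff.mp hlit (by norm_num : (0:ℝ) < 1/2),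
      Filter.eventually_ge_atTop (0:ℝ)] with t h1 h2
    have habs : ‖a * t ^ k‖ = |a| * t ^ k := by
      rw [norm_mul, Real.norm_eq_abs, Real.norm_eq_abs, abs_pow, abs_of_nonneg h2]
    rw [Real.norm_eq_abs, habs] at h1
    have h4 : |a * t ^ k| - |Polynomial.eval t f| ≤ |Polynomial.eval t f - a * t ^ k| := by
      rw [abs_sub_comm]; exact abs_sub_abs_le_abs_sub _ _
    rw [abs_mul, abs_pow, abs_of_nonneg h2] at h4
    linarith
  obtain ⟨T₀, hT₀⟩ := Filter.eventually_atTop.mp hev2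
  set T := max T₀ 1 with hT
  have hT1 : (1:ℝ) ≤ T := le_max_right _ _
  set c₀ : ℝ := (|a| / 2) ^ p * (3 + C) ^ (-m) with hc₀
  have hc₀pos : 0 < c₀ :=
    mul_pos (Real.rpow_pos_of_pos (by linarith) p) (Real.rpow_pos_of_pos (by linarith) (-m))
  have key : ∀ t ∈ Ici T, ENNReal.ofReal c₀ ≤
      ENNReal.ofReal (|Polynomial.eval t f| ^ p * (2 + (|t| + C)) ^ (-m)) := by
    intro t ht
    have htT : T ≤ t := ht
    have ht1 : (1:ℝ) ≤ t := le_trans hT1 htT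
    have ht0 : (0:ℝ) < t := lt_of_lt_of_le one_pos ht1
    apply ENNReal.ofReal_le_ofReal
    have hlow : |a| / 2 * t ^ k ≤ |Polynomial.eval t f| :=
      hT₀ t (le_trans (le_max_left _ _) htT)
    have h1 : (|a| / 2 * t ^ k) ^ p ≤ |Polynomial.eval t f| ^ p :=
      Real.rpow_le_rpow (by positivity) hlow hp0.le
    have habst : 0 ≤ |t| := abs_nonneg t
    have h2 : ((3 + C) * t) ^ (-m) ≤ (2 + (|t| + C)) ^ (-m) := by
      apply Real.rpow_le_rpow_of_nonpos (by linarith) ?_ (neg_nonpos.mpr hm.le)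
      rw [abs_of_pos ht0]; nlinarith
    have h3 : c₀ ≤ (|a| / 2 * t ^ k) ^ p * (((3 + C) * t) ^ (-m)) := by
      rw [Real.mul_rpow (by positivity) (by positivity),
        Real.mul_rpow (by linarith) ht0.le]
      have hta : ((t ^ k : ℝ)) ^ p = t ^ ((k : ℝ) * p) := by
        rw [← Real.rpow_natCast t k, ← Real.rpow_mul ht0.le]
      have htb : (1:ℝ) ≤ t ^ ((k:ℝ) * p) * t ^ (-m) := by
        rw [← Real.rpow_add ht0]
        apply Real.one_le_rpow ht1
        have : m ≤ (k:ℝ) * p := by linarith [hdeg, mul_comm p (k:ℝ)]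
        linarith
      calc c₀ = (|a|/2) ^ p * (3+C) ^ (-m) * 1 := by rw [mul_one]
        _ ≤ (|a|/2) ^ p * (3+C) ^ (-m) * (t ^ ((k:ℝ)*p) * t ^ (-m)) :=
            mul_le_mul_of_nonneg_left htb (by positivity)
        _ = (|a|/2) ^ p * (t^k) ^ p * ((3+C) ^ (-m) * t ^ (-m)) := by rw [hta]; ring
    calc c₀ ≤ (|a| / 2 * t ^ k) ^ p * (((3 + C) * t) ^ (-m)) := h3
      _ ≤ |Polynomial.eval t f| ^ p * (2 + (|t| + C)) ^ (-m) := by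
          apply mul_le_mul h1 h2 (by positivity) (by positivity)
  rw [← top_le_iff]
  calc (⊤:ℝ≥0∞) = ENNReal.ofReal c₀ * volume (Ici T) := by
        rw [Real.volume_Ici, ENNReal.mul_top (ENNReal.ofReal_pos.mpr hc₀pos).ne']
    _ = ∫⁻ _ in Ici T, ENNReal.ofReal c₀ := (setLIntegral_const _ _).symm
    _ ≤ ∫⁻ t in Ici T, ENNReal.ofReal (|Polynomial.eval t f| ^ p * (2 + (|t| + C)) ^ (-m)) :=
        setLIntegral_mono' measurableSet_Ici key
    _ ≤ _ := setLIntegral_le_lintegral _ _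

/-- non-integrability lemma in the proof of Theorem 3.7: a nonzero
polynomial whose degree `k` in some variable satisfies `p·k ≥ m` is not `p`-integrable
against the weight `(2+|x|)^{-m}`. -/
theorem polynomial_not_integrable_against_polynomial_weight
    {d : ℕ} (hd : 0 < d) (p m : ℝ) (hp : 1 < p) (hm : 0 < m)
    (q : MvPolynomial (Fin d) ℝ) (hq : q ≠ 0) (j : Fin d)
    (hdeg : m ≤ p * (q.degreeOf j : ℝ)) :
    ∫⁻ x : E d, ENNReal.ofReal
      (|MvPolynomial.eval (fun i => x i) q| ^ p * (2 + ‖x‖) ^ (-m)) = ⊤ := by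
  classical
  obtain ⟨n, rfl⟩ : ∃ n, d = n + 1 := ⟨d - 1, (Nat.succ_pred_eq_of_pos hd).symm⟩
  have hp0 : (0:ℝ) < p := lt_trans one_pos hp
  set e : Fin (n+1) ≃ Fin (n+1) := Equiv.swap 0 j with he
  set q' : MvPolynomial (Fin (n+1)) ℝ := MvPolynomial.rename ⇑e.symm q with hq'def
  have hq'0 : q' ≠ 0 := by
    intro h
    apply hq
    apply MvPolynomial.rename_injective (⇑e.symm) e.symm.injective
    rw [_root_.map_zero]; exact h
  have hdeg0 : q'.degreeOf 0 = q.degreeOf j := by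
    have h := MvPolynomial.degreeOf_rename_of_injective (p := q) (f := ⇑e.symm)
      e.symm.injective j
    rw [show e.symm j = 0 by simp [he, Equiv.symm_swap, Equiv.swap_apply_right]] at h
    rw [hq'def]; exact h
  set P : Polynomial (MvPolynomial (Fin n) ℝ) := MvPolynomial.finSuccEquiv ℝ n q' with hP
  have hP0 : P ≠ 0 := by
    intro h
    apply hq'0
    have h2 : MvPolynomial.finSuccEquiv ℝ n q' = MvPolynomial.finSuccEquiv ℝ n 0 := by
      rw [_root_.map_zero]; exact h
    exact (MvPolynomial.finSuccEquiv ℝ n).injective h2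
  set c : MvPolynomial (Fin n) ℝ := P.leadingCoeff with hc
  have hc0 : c ≠ 0 := Polynomial.leadingCoeff_ne_zero.mpr hP0
  obtain ⟨y₀, hy₀⟩ : ∃ y : Fin n → ℝ, MvPolynomial.eval y c ≠ 0 := by
    by_contra hcon
    push_neg at hcon
    exact hc0 (MvPolynomial.funext (q := 0) fun x => by simp [hcon x])
  set S : Set (Fin n → ℝ) := {x' | MvPolynomial.eval x' c ≠ 0} with hSdef
  have hSopen : IsOpen S := by
    have hrw : S = (fun x' => MvPolynomial.eval x' c) ⁻¹' ({(0:ℝ)}ᶜ) := rfl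
    rw [hrw]
    exact isClosed_singleton.isOpen_compl.preimage (MvPolynomial.continuous_eval c)
  have hSpos : 0 < volume S := hSopen.measure_pos volume ⟨y₀, hy₀⟩
  -- the product-level integrand
  set f : ℝ × (Fin n → ℝ) → ℝ≥0∞ := fun w => ENNReal.ofReal
    (|MvPolynomial.eval (Fin.cons w.1 w.2) q'| ^ p *
      (2 + (|w.1| + ∑ i, |w.2 i|)) ^ (-m)) with hfdef
  have hcons : Continuous fun w : ℝ × (Fin n → ℝ) => (Fin.cons w.1 w.2 : Fin (n+1) → ℝ) := by
    refine continuous_pi fun i => ?_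
    refine Fin.cases ?_ (fun l => ?_) i
    · simpa using (continuous_fst : Continuous fun w : ℝ × (Fin n → ℝ) => w.1)
    · exact ((continuous_apply l).comp
        (continuous_snd : Continuous fun w : ℝ × (Fin n → ℝ) => w.2))
  have hfm : Measurable f := by
    apply ENNReal.measurable_ofReal.comp
    apply Measurable.mul
    · exact (((MvPolynomial.continuous_eval q').comp hcons).abs.measurable).pow_const p
    · refine Measurable.pow_const ?_ (-m)
      have hcont : Continuous fun w : ℝ × (Fin n → ℝ) => 2 + (|w.1| + ∑ i, |w.2 i|) :=
        continuous_const.add (continuous_fst.abs.add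
          (continuous_finset_sum _ fun i _ => ((continuous_apply i).comp continuous_snd).abs))
      exact hcont.measurable
  -- inner integral diverges on S
  have hinner : ∀ x' ∈ S, ∫⁻ t : ℝ, f (t, x') = ⊤ := by
    intro x' hx'
    have hx'ne : MvPolynomial.eval x' c ≠ 0 := hx'
    set g : Polynomial ℝ := P.map (MvPolynomial.eval x') with hg
    have hlead : g.leadingCoeff = MvPolynomial.eval x' c :=
      Polynomial.leadingCoeff_map_of_leadingCoeff_ne_zero _ hx'ne
    have hg0 : g ≠ 0 := by
      intro h0
      apply hx'ne
      rw [← hlead, h0, Polynomial.leadingCoeff_zero]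
    have hgdeg : (g.natDegree : ℝ) = (q.degreeOf j : ℝ) := by
      rw [hg, Polynomial.natDegree_map_of_leadingCoeff_ne_zero _ hx'ne,
        hP, MvPolynomial.natDegree_finSuccEquiv, hdeg0]
    have heval : ∀ t : ℝ, MvPolynomial.eval (Fin.cons t x') q' = Polynomial.eval t g :=
      fun t => MvPolynomial.eval_eq_eval_mv_eval' x' t q'
    have haux := aux_one_var p m (∑ i, |x' i|) hp hm
      (Finset.sum_nonneg fun i _ => abs_nonneg _) g hg0 (by rw [hgdeg]; exact hdeg)
    calc ∫⁻ t : ℝ, f (t, x')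
        = ∫⁻ t : ℝ, ENNReal.ofReal
            (|Polynomial.eval t g| ^ p * (2 + (|t| + ∑ i, |x' i|)) ^ (-m)) := by
          refine lintegral_congr fun t => ?_
          rw [hfdef]
          simp only [heval t]
      _ = ⊤ := haux
  -- step 1 : from Euclidean space to the pi-type
  have step1 : ∫⁻ y : Fin (n+1) → ℝ, ENNReal.ofReal
      (|MvPolynomial.eval y q| ^ p * (2 + ∑ i, |y i|) ^ (-m)) ≤
      ∫⁻ x : E (n+1), ENNReal.ofReal
        (|MvPolynomial.eval (fun i => x i) q| ^ p * (2 + ‖x‖) ^ (-m)) := by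
    rw [← MeasurePreserving.lintegral_comp_emb
      ((EuclideanSpace.volume_preserving_symm_measurableEquiv_toLp (Fin (n+1))).symm)
      (MeasurableEquiv.measurableEmbedding _)
      (fun x : E (n+1) => ENNReal.ofReal
        (|MvPolynomial.eval (fun i => x i) q| ^ p * (2 + ‖x‖) ^ (-m)))]
    refine lintegral_mono fun y => ENNReal.ofReal_le_ofReal ?_
    have hcoord : (fun i => ((MeasurableEquiv.toLp 2 (Fin (n+1) → ℝ)).symm.symm y) i) = y := rfl
    have hnorm : ‖(MeasurableEquiv.toLp 2 (Fin (n+1) → ℝ)).symm.symm y‖ ≤ ∑ i, |y i| := by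
      rw [EuclideanSpace.norm_eq]
      have hcoords : ∀ i, ‖((MeasurableEquiv.toLp 2 (Fin (n+1) → ℝ)).symm.symm y) i‖ = |y i| :=
        fun i => rfl
      simp only [hcoords]
      calc Real.sqrt (∑ i, |y i| ^ 2) ≤ Real.sqrt ((∑ i, |y i|) ^ 2) :=
            Real.sqrt_le_sqrt (Finset.sum_sq_le_sq_sum_of_nonneg fun i _ => abs_nonneg _)
        _ = ∑ i, |y i| := Real.sqrt_sq (Finset.sum_nonneg fun i _ => abs_nonneg _)
    have hev : MvPolynomial.eval
        (fun i => ((MeasurableEquiv.toLp 2 (Fin (n+1) → ℝ)).symm.symm y) i) q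
        = MvPolynomial.eval y q := rfl
    rw [hev]
    refine mul_le_mul_of_nonneg_left ?_ (Real.rpow_nonneg (abs_nonneg _) p)
    exact Real.rpow_le_rpow_of_nonpos (by positivity) (by linarith) (neg_nonpos.mpr hm.le)
  -- step 2 : permutation of coordinates
  have step2 : ∫⁻ z : Fin (n+1) → ℝ, ENNReal.ofReal
      (|MvPolynomial.eval z q'| ^ p * (2 + ∑ i, |z i|) ^ (-m)) =
      ∫⁻ y : Fin (n+1) → ℝ, ENNReal.ofReal
        (|MvPolynomial.eval y q| ^ p * (2 + ∑ i, |y i|) ^ (-m)) := by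
    rw [← MeasurePreserving.lintegral_comp_emb
      (volume_measurePreserving_piCongrLeft (fun _ : Fin (n+1) => ℝ) e)
      (MeasurableEquiv.measurableEmbedding _)
      (fun y : Fin (n+1) → ℝ => ENNReal.ofReal
        (|MvPolynomial.eval y q| ^ p * (2 + ∑ i, |y i|) ^ (-m)))]
    refine lintegral_congr fun z => ?_
    have happ : (MeasurableEquiv.piCongrLeft (fun _ : Fin (n+1) => ℝ) e) z
        = fun i => z (e.symm i) := by
      funext i
      have h1 := MeasurableEquiv.piCongrLeft_apply_apply (β := fun _ : Fin (n+1) => ℝ)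
        e z (e.symm i)
      rwa [Equiv.apply_symm_apply] at h1
    simp only [happ]
    have hsum : (∑ i, |z (e.symm i)|) = ∑ i, |z i| := Equiv.sum_comp e.symm fun i => |z i|
    have hev : MvPolynomial.eval z q' = MvPolynomial.eval (fun i => z (e.symm i)) q := by
      rw [hq'def, MvPolynomial.eval_rename]
      rfl
    rw [hsum, hev]
  -- step 3 : splitting off the first coordinate
  have step3 : ∫⁻ w : ℝ × (Fin n → ℝ), f w =
      ∫⁻ z : Fin (n+1) → ℝ, ENNReal.ofReal
        (|MvPolynomial.eval z q'| ^ p * (2 + ∑ i, |z i|) ^ (-m)) := by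
    rw [← MeasurePreserving.lintegral_comp_emb
      ((volume_preserving_piFinSuccAbove (fun _ : Fin (n+1) => ℝ) 0).symm)
      (MeasurableEquiv.measurableEmbedding _)
      (fun z : Fin (n+1) → ℝ => ENNReal.ofReal
        (|MvPolynomial.eval z q'| ^ p * (2 + ∑ i, |z i|) ^ (-m)))]
    refine lintegral_congr fun w => ?_
    have hsymm : (MeasurableEquiv.piFinSuccAbove (fun _ : Fin (n+1) => ℝ) 0).symm w
        = Fin.cons w.1 w.2 := by
      simp only [MeasurableEquiv.piFinSuccAbove_symm_apply, Fin.insertNthEquiv,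
        Equiv.coe_fn_mk, Fin.insertNth_zero']
    rw [hfdef]
    simp only [hsymm]
    have hsum : (∑ i, |Fin.cons w.1 w.2 i|) = |w.1| + ∑ i, |w.2 i| := by
      rw [Fin.sum_univ_succ]
      simp
    rw [hsum]
  -- step 4 : Tonelli
  have step4 : ∫⁻ w : ℝ × (Fin n → ℝ), f w = ∫⁻ x' : Fin n → ℝ, ∫⁻ t : ℝ, f (t, x') := by
    rw [volume_eq_prod]
    exact lintegral_prod_symm f hfm.aemeasurable
  rw [← top_le_iff]
  calc (⊤:ℝ≥0∞) = ⊤ * volume S := (ENNReal.top_mul hSpos.ne').symm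
    _ = ∫⁻ x', S.indicator (fun _ => (⊤:ℝ≥0∞)) x' := by
        rw [lintegral_indicator_const hSopen.measurableSet]
    _ ≤ ∫⁻ x' : Fin n → ℝ, ∫⁻ t : ℝ, f (t, x') := by
        refine lintegral_mono fun x' => ?_
        by_cases hx : x' ∈ S
        · rw [Set.indicator_of_mem hx, hinner x' hx]
        · rw [Set.indicator_of_notMem hx]; exact zero_le
    _ = ∫⁻ w, f w := step4.symm
    _ = ∫⁻ z : Fin (n+1) → ℝ, ENNReal.ofReal
          (|MvPolynomial.eval z q'| ^ p * (2 + ∑ i, |z i|) ^ (-m)) := step3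
    _ = ∫⁻ y : Fin (n+1) → ℝ, ENNReal.ofReal
          (|MvPolynomial.eval y q| ^ p * (2 + ∑ i, |y i|) ^ (-m)) := step2
    _ ≤ _ := step1
end LevyOU
end
end

section
/- Let μ̄ be a probability measure on ℝ^d, and let b, b' : ℝ^d → [0,∞) be measurable probability densities (∫ b = ∫ b' = 1) with b symmetric (b(−x) = b(x)) and b'(x) ≤ K·b(x) for all x, for some constant K > 0. Let μ be the measure on ℝ^d with Lebesgue density x ↦ ∫ b(x − y) dμ̄(y). Then for every 1 ≤ p < ∞ and every measurable f : ℝ^d → ℝ, ∫_{ℝ^d} |(b' ∗ f)(x)|^p dμ̄(x) ≤ K ∫_{ℝ^d} |f|^p dμ, where (b' ∗ f)(x) := ∫ f(y) b'(x − y) dy. -/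
open MeasureTheory Measure Matrix Set
open scoped ENNReal NNReal InnerProductSpace

noncomputable section

namespace LevyOU

variable {d : ℕ}

/-- Jensen step: for a probability density `w`, `(∫ h w)^p ≤ ∫ h^p w`. -/
theorem jensen_step {α : Type*} [MeasurableSpace α] (vol : Measure α)
    (w : α → ℝ≥0∞) (hw : Measurable w) (hw1 : ∫⁻ y, w y ∂vol = 1)
    (f : α → ℝ) (hf : Measurable f) (p : ℝ) (hp : 1 ≤ p) :
    (∫⁻ y, ENNReal.ofReal |f y| * w y ∂vol) ^ p ≤
      ∫⁻ y, ENNReal.ofReal |f y| ^ p * w y ∂vol := by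
  have hp0 : (0:ℝ) < p := lt_of_lt_of_le one_pos hp
  have hpne : ENNReal.ofReal p ≠ 0 := by
    simp [ENNReal.ofReal_eq_zero, not_le, hp0]
  set ν : Measure α := vol.withDensity w with hν
  have hprob : IsProbabilityMeasure ν := ⟨by
    rw [hν, withDensity_apply _ MeasurableSet.univ, Measure.restrict_univ]; exact hw1⟩
  have hmeas1 : ∫⁻ y, ENNReal.ofReal |f y| * w y ∂vol = eLpNorm f 1 ν := by
    rw [eLpNorm_one_eq_lintegral_enorm, hν,
      lintegral_withDensity_eq_lintegral_mul _ hw hf.enorm]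
    refine lintegral_congr fun y => ?_
    simp [Real.enorm_eq_ofReal_abs, mul_comm]
  have hmeasp : ∫⁻ y, ENNReal.ofReal |f y| ^ p * w y ∂vol
      = (eLpNorm f (ENNReal.ofReal p) ν) ^ p := by
    rw [eLpNorm_eq_lintegral_rpow_enorm_toReal hpne ENNReal.ofReal_ne_top,
      ENNReal.toReal_ofReal hp0.le, one_div, ← ENNReal.rpow_mul,
      inv_mul_cancel₀ (ne_of_gt hp0), ENNReal.rpow_one, hν,
      lintegral_withDensity_eq_lintegral_mul _ hw
        (hf.enorm.pow_const _)]
    · refine lintegral_congr fun y => ?_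
      simp [Real.enorm_eq_ofReal_abs, mul_comm]
  rw [hmeas1, hmeasp]
  exact ENNReal.rpow_le_rpow
    (eLpNorm_le_eLpNorm_of_exponent_le (by simpa using hp) hf.aestronglyMeasurable) hp0.le

/-- transfer estimate in the proof of Theorem 3.8:
`∫ |b' ∗ f|^p dμ̄ ≤ K ∫ |f|^p dμ` where `μ` has density `x ↦ ∫ b(x−y) dμ̄(y)`. -/
theorem convolution_transfer_estimate
    {d : ℕ} (hd : 0 < d)
    (μb : Measure (E d)) [IsProbabilityMeasure μb]
    (b b' : E d → ℝ) (hbm : Measurable b) (hb'm : Measurable b')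
    (hb0 : ∀ x, 0 ≤ b x) (hb'0 : ∀ x, 0 ≤ b' x)
    (hbint : ∫ x, b x = 1) (hb'int : ∫ x, b' x = 1)
    (hbsymm : ∀ x, b (-x) = b x)
    (K : ℝ) (hK : 0 < K) (hdom : ∀ x, b' x ≤ K * b x)
    (μ : Measure (E d))
    (hμ : μ = volume.withDensity fun x => ENNReal.ofReal (∫ y, b (x - y) ∂μb))
    (p : ℝ) (hp : 1 ≤ p) (f : E d → ℝ) (hf : Measurable f) :
    ∫⁻ x, ENNReal.ofReal (|∫ y, f y * b' (x - y)| ^ p) ∂μb ≤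
      ENNReal.ofReal K * ∫⁻ x, ENNReal.ofReal (|f x| ^ p) ∂μ := by
  classical
  have hp0 : (0:ℝ) < p := lt_of_lt_of_le one_pos hp
  -- integrability of the densities
  have hbInt : Integrable b (volume : Measure (E d)) := by
    by_contra h; rw [integral_undef h] at hbint; exact one_ne_zero hbint.symm
  have hb'Int : Integrable b' (volume : Measure (E d)) := by
    by_contra h; rw [integral_undef h] at hb'int; exact one_ne_zero hb'int.symm
  have lb : ∫⁻ z, ENNReal.ofReal (b z) = 1 := by
    rw [← ofReal_integral_eq_lintegral_ofReal hbInt (ae_of_all _ hb0), hbint,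
      ENNReal.ofReal_one]
  have lb' : ∫⁻ z, ENNReal.ofReal (b' z) = 1 := by
    rw [← ofReal_integral_eq_lintegral_ofReal hb'Int (ae_of_all _ hb'0), hb'int,
      ENNReal.ofReal_one]
  set g : E d → ℝ≥0∞ := fun y => ENNReal.ofReal |f y| ^ p with hgdef
  have hgm : Measurable g :=
    ENNReal.continuous_rpow_const.measurable.comp hf.abs.ennreal_ofReal
  -- pointwise Jensen bound
  have key : ∀ x, ENNReal.ofReal (|∫ y, f y * b' (x - y)| ^ p)
      ≤ ∫⁻ y, g y * ENNReal.ofReal (b' (x - y)) := by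
    intro x
    have hw : Measurable fun y : E d => ENNReal.ofReal (b' (x - y)) :=
      (hb'm.comp (measurable_const.sub measurable_id)).ennreal_ofReal
    have hw1 : ∫⁻ y, ENNReal.ofReal (b' (x - y)) = 1 := by
      rw [(measurePreserving_sub_left (volume : Measure (E d)) x).lintegral_comp
        hb'm.ennreal_ofReal]
      exact lb'
    calc ENNReal.ofReal (|∫ y, f y * b' (x - y)| ^ p)
        = ENNReal.ofReal |∫ y, f y * b' (x - y)| ^ p :=
          (ENNReal.ofReal_rpow_of_nonneg (abs_nonneg _) hp0.le).symm
      _ ≤ (∫⁻ y, ENNReal.ofReal |f y| * ENNReal.ofReal (b' (x - y))) ^ p := by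
          refine ENNReal.rpow_le_rpow ?_ hp0.le
          calc ENNReal.ofReal |∫ y, f y * b' (x - y)|
              = ↑‖∫ y, f y * b' (x - y)‖₊ := (Real.enorm_eq_ofReal_abs _).symm
            _ ≤ ∫⁻ y, ↑‖f y * b' (x - y)‖₊ := enorm_integral_le_lintegral_enorm _
            _ = _ := by
                refine lintegral_congr fun y => ?_
                rw [nnnorm_mul, ENNReal.coe_mul, ← enorm_eq_nnnorm, ← enorm_eq_nnnorm, Real.enorm_eq_ofReal_abs,
                  Real.enorm_eq_ofReal (hb'0 _)]
      _ ≤ ∫⁻ y, g y * ENNReal.ofReal (b' (x - y)) :=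
          jensen_step volume _ hw hw1 f hf p hp
  -- measurability of various integrands
  have hjoint : Measurable fun q : E d × E d => ENNReal.ofReal (b (q.1 - q.2)) :=
    (hbm.comp (measurable_fst.sub measurable_snd)).ennreal_ofReal
  have hjoint' : Measurable fun q : E d × E d =>
      ENNReal.ofReal (b (q.2 - q.1)) * g q.2 :=
    ((hbm.comp (measurable_snd.sub measurable_fst)).ennreal_ofReal).mul
      (hgm.comp measurable_snd)
  -- `D y = ∫⁻ x, b(y - x) dμb(x)` is the (lintegral) density of `μ`
  set D : E d → ℝ≥0∞ := fun y => ∫⁻ x, ENNReal.ofReal (b (y - x)) ∂μb with hDdef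
  have hDm : Measurable D := Measurable.lintegral_prod_right hjoint
  have hDint : ∫⁻ y, D y = 1 := by
    rw [hDdef]
    rw [lintegral_lintegral_swap hjoint.aemeasurable]
    have : ∀ x : E d, ∫⁻ y, ENNReal.ofReal (b (y - x)) = 1 := fun x => by
      rw [(measurePreserving_sub_right (volume : Measure (E d)) x).lintegral_comp
        hbm.ennreal_ofReal]
      exact lb
    simp only [this]
    simp
  have hDae : ∀ᵐ y ∂(volume : Measure (E d)),
      ENNReal.ofReal (∫ z, b (y - z) ∂μb) = D y := by
    filter_upwards [ae_lt_top hDm (by rw [hDint]; exact ENNReal.one_ne_top)] with y hy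
    have hint : Integrable (fun z => b (y - z)) μb := by
      refine ⟨(hbm.comp (measurable_const.sub measurable_id)).aestronglyMeasurable, ?_⟩
      have : ∫⁻ z, ↑‖b (y - z)‖₊ ∂μb < ∞ := by
        rw [lintegral_congr fun z => (enorm_eq_nnnorm (b (y - z))).symm.trans (Real.enorm_eq_ofReal (hb0 (y - z)))]
        exact hy
      exact this
    rw [ofReal_integral_eq_lintegral_ofReal hint (ae_of_all _ fun z => hb0 _)]
  have hinner : ∀ x : E d, Measurable fun y : E d =>
      ENNReal.ofReal (b (x - y)) * g y := fun x =>
    ((hbm.comp (measurable_const.sub measurable_id)).ennreal_ofReal).mul hgm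
  have houter : Measurable fun x : E d =>
      ∫⁻ y, ENNReal.ofReal (b (x - y)) * g y ∂volume := by
    exact Measurable.lintegral_prod_right' (hjoint.mul (hgm.comp measurable_snd))
  -- main chain
  calc ∫⁻ x, ENNReal.ofReal (|∫ y, f y * b' (x - y)| ^ p) ∂μb
      ≤ ∫⁻ x, ∫⁻ y, g y * ENNReal.ofReal (b' (x - y)) ∂volume ∂μb :=
        lintegral_mono key
    _ ≤ ∫⁻ x, ∫⁻ y, ENNReal.ofReal K * (ENNReal.ofReal (b (x - y)) * g y) ∂volume ∂μb := by
        refine lintegral_mono fun x => lintegral_mono fun y => ?_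
        rw [mul_comm (g y), ← mul_assoc, ← ENNReal.ofReal_mul hK.le]
        exact mul_le_mul_left (ENNReal.ofReal_le_ofReal (hdom _)) _
    _ = ENNReal.ofReal K * ∫⁻ x, ∫⁻ y, ENNReal.ofReal (b (x - y)) * g y ∂volume ∂μb := by
        rw [← lintegral_const_mul _ houter]
        refine lintegral_congr fun x => ?_
        rw [← lintegral_const_mul _ (hinner x)]
    _ = ENNReal.ofReal K * ∫⁻ y, ∫⁻ x, ENNReal.ofReal (b (x - y)) * g y ∂μb ∂volume := by
        rw [lintegral_lintegral_swap ((hjoint.mul (hgm.comp measurable_snd)).aemeasurable)]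
    _ = ENNReal.ofReal K * ∫⁻ y, D y * g y ∂volume := by
        congr 1
        refine lintegral_congr fun y => ?_
        have hm : Measurable fun x : E d => ENNReal.ofReal (b (x - y)) :=
          (hbm.comp (measurable_id.sub measurable_const)).ennreal_ofReal
        rw [lintegral_mul_const _ hm]
        congr 1
        refine lintegral_congr fun x => ?_
        rw [show x - y = -(y - x) by abel, hbsymm]
    _ = ENNReal.ofReal K * ∫⁻ y, ENNReal.ofReal (∫ z, b (y - z) ∂μb) * g y ∂volume := by
        congr 1
        refine lintegral_congr_ae ?_
        filter_upwards [hDae] with y hy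
        rw [hy]
    _ = ENNReal.ofReal K * ∫⁻ x, ENNReal.ofReal (|f x| ^ p) ∂μ := by
        congr 1
        have hdens : Measurable fun x : E d => ENNReal.ofReal (∫ z, b (x - z) ∂μb) := by
          apply Measurable.ennreal_ofReal
          exact (StronglyMeasurable.integral_prod_right'
            ((hbm.comp (measurable_fst.sub measurable_snd)).stronglyMeasurable)).measurable
        have hgg : (fun x : E d => ENNReal.ofReal (|f x| ^ p)) = g := by
          funext x
          exact (ENNReal.ofReal_rpow_of_nonneg (abs_nonneg _) hp0.le).symm
        rw [hμ, hgg, lintegral_withDensity_eq_lintegral_mul _ hdens hgm]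
        rfl
end LevyOU
end
end
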